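/- The commute time κ(i,j) := H_{ij} + H_{ji} satisfies the spectral decomposition κ(i,j) = 2|E| · ∑_{k=2}^{n} (1/(1 − λ_k)) · ( v_{k,i}/√d_i − v_{k,j}/√d_j )². -/

import Mathlib

/- STATEMENT 11: The commute time κ(i,j) := H_{ij} + H_{ji} satisfies κ(i,j) = 2|E| · ∑_{k=2}^n (1/(1 − λ_k)) · ( v_{k,i}/√d_i − v_{k,j}/√d_j )². -/
set_option maxHeartbeats 1000000 in
open Matrix in
/-- The commute time κ(i,j) := H_{ij} + H_{ji} satisfies κ(i,j) = 2|E| · ∑_{k=2}^n (1/(1 − λ_k)) · ( v_{k,i}/√d_i − v_{k,j}/√d_j )². -/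
theorem stmt_11
    (n : ℕ) (hn : 2 ≤ n)
    (A : Matrix (Fin n) (Fin n) ℝ)
    (hsym : ∀ i j, A i j = A j i)
    (hnonneg : ∀ i j, 0 ≤ A i j)
    (hdiag : ∀ i, A i i = 0)
    (d : Fin n → ℝ) (hd : ∀ i, d i = ∑ j, A i j)
    (hdpos : ∀ i, 0 < d i)
    (twoE : ℝ) (htwoE : twoE = ∑ i, d i)
    (B : Matrix (Fin n) (Fin n) ℝ)
    (hB : ∀ i j, B i j = A i j / (Real.sqrt (d i) * Real.sqrt (d j)))
    (lam : Fin n → ℝ) (v : Fin n → Fin n → ℝ)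
    (hmono : Antitone lam)
    (hlam1 : lam ⟨0, by omega⟩ = 1)
    (heig : ∀ k, B.mulVec (v k) = lam k • v k)
    (horth : ∀ k l, (∑ x, v k x * v l x) = (if k = l then (1 : ℝ) else 0))
    (hv1 : ∀ j, v ⟨0, by omega⟩ j = Real.sqrt (d j / twoE))
    (hgap : lam ⟨1, by omega⟩ < 1)
    (hconn : (SimpleGraph.fromRel fun i j : Fin n => 0 < A i j).Connected)
    (H : Fin n → Fin n → ℝ)
    (hH0 : ∀ j, H j j = 0)
    (hHrec : ∀ i j, i ≠ j → H i j = 1 + ∑ k, (A i k / d i) * H k j) :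
    ∀ i j, H i j + H j i = twoE * ∑ k ∈ Finset.univ.filter (fun k : Fin n => k.val ≠ 0),
      (1 / (1 - lam k)) * (v k i / Real.sqrt (d i) - v k j / Real.sqrt (d j)) ^ 2 := by
  classical
  have hsd : ∀ x, (0:ℝ) < Real.sqrt (d x) := fun x => Real.sqrt_pos.2 (hdpos x)
  have hsdsq : ∀ x, Real.sqrt (d x) * Real.sqrt (d x) = d x :=
    fun x => Real.mul_self_sqrt (hdpos x).le
  have htwoEpos : 0 < twoE := by
    rw [htwoE]
    exact Finset.sum_pos (fun i _ => hdpos i) ⟨⟨0, by omega⟩, Finset.mem_univ _⟩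
  set z : Fin n := ⟨0, by omega⟩ with hzdef
  have hgapk : ∀ k : Fin n, (k:ℕ) ≠ 0 → 0 < 1 - lam k := by
    intro k hk
    have h1 : (⟨1, by omega⟩ : Fin n) ≤ k := by
      rw [Fin.le_def]; show (1:ℕ) ≤ (k:ℕ); omega
    have := hmono h1
    linarith
  have hle1 : ∀ k, lam k ≤ 1 := by
    intro k
    have h0 : z ≤ k := by rw [Fin.le_def]; show (0:ℕ) ≤ (k:ℕ); omega
    have := hmono h0
    rw [hlam1] at this
    linarith
  have heigp : ∀ k i, (∑ x, B i x * v k x) = lam k * v k i := by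
    intro k i
    have := congrFun (heig k) i
    simpa [Matrix.mulVec, dotProduct] using this
  have hcol : ∀ i j, (∑ k, v k i * v k j) = (if i = j then (1:ℝ) else 0) := by
    intro i j
    have h1 : (Matrix.of v) * (Matrix.of v)ᵀ = 1 := by
      ext k l
      simpa [Matrix.mul_apply, Matrix.one_apply] using horth k l
    have h2 : (Matrix.of v)ᵀ * (Matrix.of v) = 1 := mul_eq_one_comm.mp h1
    have := congrFun (congrFun h2 i) j
    simpa [Matrix.mul_apply, Matrix.one_apply, mul_comm] using this
  have hstepB : ∀ i k, (∑ x, (A i x / d i) * (v k x / Real.sqrt (d x)))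
      = lam k * (v k i / Real.sqrt (d i)) := by
    intro i k
    have step : ∀ x, (A i x / d i) * (v k x / Real.sqrt (d x))
        = (B i x * v k x) / Real.sqrt (d i) := by
      intro x
      rw [hB, ← hsdsq i]
      rw [Real.sqrt_mul_self (hsd i).le]
      ring
    rw [Finset.sum_congr rfl (fun x _ => step x), ← Finset.sum_div, heigp, mul_div_assoc]
  have hrow : ∀ i, (∑ x, A i x / d i) = 1 := by
    intro i
    rw [← Finset.sum_div, ← hd i, div_self (hdpos i).ne']
  have hv1e : ∀ i, v z i = Real.sqrt (d i) / Real.sqrt twoE := by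
    intro i; rw [hv1, Real.sqrt_div (hdpos i).le]
  have hv1prod : ∀ i j, v z i * v z j = Real.sqrt (d i) * Real.sqrt (d j) / twoE := by
    intro i j
    rw [hv1e, hv1e, div_mul_div_comm, Real.mul_self_sqrt htwoEpos.le]
  set S : Finset (Fin n) := Finset.univ.filter (fun k : Fin n => (k:ℕ) ≠ 0) with hSdef
  have hSerase : S = Finset.univ.erase z := by
    ext k
    simp [hSdef, Finset.mem_erase, Fin.ext_iff, hzdef]
  -- sum over S of products of eigenvector coordinates
  have hSsum : ∀ i j, i ≠ j →
      (∑ k ∈ S, v k i * v k j) = -(Real.sqrt (d i) * Real.sqrt (d j) / twoE) := by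
    intro i j hij
    have := Finset.sum_erase_add Finset.univ (fun k => v k i * v k j) (Finset.mem_univ z)
    rw [hcol i j, if_neg hij] at this
    have this2 : (∑ k ∈ Finset.univ.erase z, v k i * v k j) + v z i * v z j = 0 := by
      simpa using this
    rw [hSerase]
    have h2 := hv1prod i j
    linarith [this2]
  set ψ : Fin n → Fin n → ℝ := fun k i => v k i / Real.sqrt (d i) with hψdef
  set F : Fin n → Fin n → ℝ :=
    fun i j => twoE * ∑ k ∈ S, (1/(1 - lam k)) * (ψ k j * ψ k j - ψ k i * ψ k j) with hFdef
  have hF0 : ∀ j, F j j = 0 := by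
    intro j
    simp [hFdef]
  have hFrec : ∀ i j, i ≠ j → F i j = 1 + ∑ x, (A i x / d i) * F x j := by
    intro i j hij
    have hswap : (∑ x, (A i x / d i) * F x j)
        = ∑ k ∈ S, (twoE * (1/(1 - lam k)) * (ψ k j * ψ k j)
            - twoE * (1/(1 - lam k)) * ψ k j * (lam k * ψ k i)) := by
      have e1 : ∀ x, (A i x / d i) * F x j
          = ∑ k ∈ S, ((twoE * (1/(1 - lam k)) * (ψ k j * ψ k j)) * (A i x / d i)
              - (twoE * (1/(1 - lam k)) * ψ k j) * ((A i x / d i) * ψ k x)) := by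
        intro x
        simp only [hFdef]
        rw [Finset.mul_sum, Finset.mul_sum]
        exact Finset.sum_congr rfl (fun k _ => by ring)
      rw [Finset.sum_congr rfl (fun x _ => e1 x), Finset.sum_comm]
      refine Finset.sum_congr rfl (fun k _ => ?_)
      rw [Finset.sum_sub_distrib, ← Finset.mul_sum, ← Finset.mul_sum, hrow, hstepB]
      ring
    have hdiff : F i j - (∑ x, (A i x / d i) * F x j) = 1 := by
      rw [hswap, hFdef]
      simp only
      rw [Finset.mul_sum, ← Finset.sum_sub_distrib]
      have e2 : ∀ k ∈ S, (twoE * ((1/(1 - lam k)) * (ψ k j * ψ k j - ψ k i * ψ k j))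
          - (twoE * (1/(1 - lam k)) * (ψ k j * ψ k j)
            - twoE * (1/(1 - lam k)) * ψ k j * (lam k * ψ k i)))
          = -(twoE * (ψ k i * ψ k j)) := by
        intro k hk
        have hkne : (k:ℕ) ≠ 0 := by
          rw [hSdef] at hk
          simpa using (Finset.mem_filter.mp hk).2
        have h1 : (1/(1 - lam k)) * (1 - lam k) = 1 :=
          one_div_mul_cancel (hgapk k hkne).ne'
        linear_combination (-(twoE * (ψ k i * ψ k j))) * h1
      rw [Finset.sum_congr rfl e2]
      have e3 : ∀ k ∈ S, -(twoE * (ψ k i * ψ k j))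
          = (-(twoE) / (Real.sqrt (d i) * Real.sqrt (d j))) * (v k i * v k j) := by
        intro k _
        simp only [hψdef]
        field_simp
      rw [Finset.sum_congr rfl e3, ← Finset.mul_sum, hSsum i j hij]
      field_simp [htwoEpos.ne', (hsd i).ne', (hsd j).ne']
    linarith [hdiff]
  -- uniqueness: H = F
  have hHF : ∀ j i, H i j = F i j := by
    intro j
    set g : Fin n → ℝ := fun i => H i j - F i j with hgdef
    have hgj : g j = 0 := by simp [hgdef, hH0, hF0]
    have hgrec : ∀ i, i ≠ j → g i = ∑ x, (A i x / d i) * g x := by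
      intro i hij
      simp only [hgdef]
      rw [hHrec i j hij, hFrec i j hij]
      rw [Finset.sum_congr rfl (fun x _ => mul_sub (A i x / d i) (H x j) (F x j)),
        Finset.sum_sub_distrib]
      ring
    set w : Fin n → ℝ := fun i => Real.sqrt (d i) * g i with hwdef
    set c : Fin n → ℝ := fun l => ∑ x, w x * v l x with hcdef
    have hwexp : ∀ i, w i = ∑ l, c l * v l i := by
      intro i
      have e1 : ∀ l, c l * v l i = ∑ x, w x * (v l x * v l i) := by
        intro l
        simp only [hcdef]
        rw [Finset.sum_mul]
        exact Finset.sum_congr rfl (fun x _ => by ring)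
      rw [Finset.sum_congr rfl (fun l _ => e1 l), Finset.sum_comm]
      have e2 : ∀ x, (∑ l, w x * (v l x * v l i)) = w x * (if x = i then (1:ℝ) else 0) := by
        intro x
        rw [← Finset.mul_sum, hcol]
      have e3 : ∀ x, w x * (if x = i then (1:ℝ) else 0) = if x = i then w x else 0 := by
        intro x; split <;> simp
      rw [Finset.sum_congr rfl (fun x _ => (e2 x).trans (e3 x)), Finset.sum_ite_eq']
      simp
    have hBw : ∀ i, (∑ x, B i x * w x) = ∑ l, c l * (lam l * v l i) := by
      intro i
      have e : ∀ x, B i x * w x = ∑ l, c l * (B i x * v l x) := by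
        intro x
        rw [hwexp x, Finset.mul_sum]
        exact Finset.sum_congr rfl (fun l _ => by ring)
      rw [Finset.sum_congr rfl (fun x _ => e x), Finset.sum_comm]
      refine Finset.sum_congr rfl (fun l _ => ?_)
      rw [← Finset.mul_sum, heigp]
    -- the quadratic form vanishes
    have hwj : w j = 0 := by simp [hwdef, hgj]
    have hharm : ∀ i, i ≠ j → w i - (∑ x, B i x * w x) = 0 := by
      intro i hij
      have e : ∀ (x : Fin n) (G : ℝ), B i x * (Real.sqrt (d x) * G)
          = (Real.sqrt (d i)) * ((A i x / d i) * G) := by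
        intro x G
        rw [hB, ← hsdsq i]
        rw [Real.sqrt_mul_self (hsd i).le]
        field_simp [(hsd x).ne', (hsd i).ne']
      have hsum : (∑ x, B i x * w x) = Real.sqrt (d i) * ∑ x, (A i x / d i) * g x := by
        rw [Finset.mul_sum]
        refine Finset.sum_congr rfl (fun x _ => ?_)
        exact e x (g x)
      rw [hsum, ← hgrec i hij]
      show Real.sqrt (d i) * g i - Real.sqrt (d i) * g i = 0
      ring
    have hQ : (∑ l, c l * c l * (1 - lam l)) = 0 := by
      have lhs : (∑ i, w i * (w i - ∑ x, B i x * w x)) = 0 := by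
        refine Finset.sum_eq_zero (fun i _ => ?_)
        by_cases hij : i = j
        · subst hij; rw [hwj]; ring
        · rw [hharm i hij]; ring
      rw [← lhs]
      have e : ∀ i, w i * (w i - ∑ x, B i x * w x)
          = ∑ l, ∑ l', (c l * (c l' * (1 - lam l'))) * (v l i * v l' i) := by
        intro i
        rw [hBw i, hwexp i, ← Finset.sum_sub_distrib, Finset.sum_mul]
        refine Finset.sum_congr rfl (fun l _ => ?_)
        rw [Finset.mul_sum]
        refine Finset.sum_congr rfl (fun l' _ => ?_)
        ring
      rw [Finset.sum_congr rfl (fun i _ => e i), Finset.sum_comm]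
      refine (Finset.sum_congr rfl (fun l _ => ?_)).symm
      rw [Finset.sum_comm]
      have e2 : ∀ l', (∑ i, (c l * (c l' * (1 - lam l'))) * (v l i * v l' i))
          = (if l = l' then c l * (c l' * (1 - lam l')) else 0) := by
        intro l'
        rw [← Finset.mul_sum, horth]
        split <;> simp
      rw [Finset.sum_congr rfl (fun l' _ => e2 l'), Finset.sum_ite_eq]
      simp only [Finset.mem_univ, if_true]
      ring
    have hceq : ∀ l : Fin n, (l:ℕ) ≠ 0 → c l = 0 := by
      intro l hl
      have hterm : ∀ l' ∈ Finset.univ, (0:ℝ) ≤ c l' * c l' * (1 - lam l') := by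
        intro l' _
        have := hle1 l'
        nlinarith [sq_nonneg (c l')]
      have h0 := (Finset.sum_eq_zero_iff_of_nonneg hterm).mp hQ l (Finset.mem_univ l)
      have hpos := hgapk l hl
      rcases mul_eq_zero.mp h0 with h | h
      · exact mul_self_eq_zero.mp h
      · exact absurd h hpos.ne'
    have hwz : ∀ i, w i = c z * v z i := by
      intro i
      rw [hwexp i]
      rw [← Finset.sum_erase_add Finset.univ _ (Finset.mem_univ z)]
      have : (∑ l ∈ Finset.univ.erase z, c l * v l i) = 0 := by
        refine Finset.sum_eq_zero (fun l hl => ?_)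
        have hlz : l ≠ z := (Finset.mem_erase.mp hl).1
        have : (l:ℕ) ≠ 0 := by
          intro h
          exact hlz (Fin.ext (by simp [h, hzdef]))
        rw [hceq l this]; ring
      rw [this]; ring
    have hcz : c z = 0 := by
      have := hwz j
      rw [hwj, hv1e j] at this
      have hvpos : 0 < Real.sqrt (d j) / Real.sqrt twoE :=
        div_pos (hsd j) (Real.sqrt_pos.2 htwoEpos)
      rcases mul_eq_zero.mp this.symm with h | h
      · exact h
      · exact absurd h (ne_of_gt hvpos)
    have hgzero : ∀ i, g i = 0 := by
      intro i
      have := hwz i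
      rw [hcz] at this
      simp only [hwdef] at this
      have h2 : Real.sqrt (d i) * g i = 0 := by rw [this]; ring
      rcases mul_eq_zero.mp h2 with h | h
      · exact absurd h (ne_of_gt (hsd i))
      · exact h
    intro i
    have := hgzero i
    simp only [hgdef] at this
    linarith
  -- conclude
  intro i j
  rw [hHF j i, hHF i j]
  simp only [hFdef]
  rw [← mul_add, ← Finset.sum_add_distrib]
  congr 1
  refine Finset.sum_congr rfl (fun k _ => ?_)
  simp only [hψdef]
  ring
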